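/- Let R be a subsuperring of a superring S and suppose S is integral over R in the sense that every even element x ∈ S₀ satisfies a monic polynomial equation x^n + a_{n-1}x^{n-1} + ⋯ + a_0 = 0 with coefficients a_i ∈ R. Let v be a valuation on R and w a valuation on S such that A_v ⊆ A_w and 𝔭_v = A_v ∩ 𝔭_w. Then S·supp(v) ⊆ supp(w); in particular supp(v) ⊆ supp(w), so w is an extension of v to S. -/

import Mathlib

universe u

/-- A superring: a `ZMod 2`-graded ring `R = R₀ ⊕ R₁` which is supercommutative
(`R₀` is central and every odd element squares to zero). -/
structure IsSuperring {R : Type*} [Ring R] (𝒜 : ZMod 2 → AddSubgroup R) : Prop where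
  one_mem : (1 : R) ∈ 𝒜 0
  mul_mem : ∀ {i j : ZMod 2} {x y : R}, x ∈ 𝒜 i → y ∈ 𝒜 j → x * y ∈ 𝒜 (i + j)
  decompose : ∀ x : R, ∃ x0 ∈ 𝒜 0, ∃ x1 ∈ 𝒜 1, x = x0 + x1
  unique_decomp : ∀ x0 ∈ 𝒜 0, ∀ x1 ∈ 𝒜 1, x0 + x1 = 0 → x0 = 0 ∧ x1 = 0
  even_central : ∀ x ∈ 𝒜 0, ∀ y : R, x * y = y * x
  odd_sq : ∀ x ∈ 𝒜 1, x * x = 0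

/-- A (Manis) valuation on a ring `R`: a surjective map `v : R → Γ ∪ {∞}`
(`∞ = ⊤` is absorbing and greater than every element of the totally ordered
abelian group `Γ`) with `v 0 = ∞`, `v 1 = 0`, `v (x*y) = v x + v y` and
`v (x+y) ≥ min (v x) (v y)`. -/
structure IsValuation {R : Type*} [Ring R] {Γ : Type*} [AddCommGroup Γ] [LinearOrder Γ] [IsOrderedAddMonoid Γ]
    (v : R → WithTop Γ) : Prop where
  surjective : Function.Surjective v
  map_zero : v 0 = ⊤
  map_one : v 1 = 0
  map_mul : ∀ x y : R, v (x * y) = v x + v y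
  min_le_add : ∀ x y : R, min (v x) (v y) ≤ v (x + y)

/-- `A_v = {x : v x ≥ 0}`. -/
def valRing {R : Type*} [Ring R] {Γ : Type*} [AddCommGroup Γ] [LinearOrder Γ] [IsOrderedAddMonoid Γ]
    (v : R → WithTop Γ) : Set R := {x : R | 0 ≤ v x}

/-- `𝔭_v = {x : v x > 0}`. -/
def valIdeal {R : Type*} [Ring R] {Γ : Type*} [AddCommGroup Γ] [LinearOrder Γ] [IsOrderedAddMonoid Γ]
    (v : R → WithTop Γ) : Set R := {x : R | 0 < v x}

/-- `supp v = v⁻¹(∞)`. -/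
def valSupp {R : Type*} [Ring R] {Γ : Type*} [AddCommGroup Γ] [LinearOrder Γ] [IsOrderedAddMonoid Γ]
    (v : R → WithTop Γ) : Set R := {x : R | v x = ⊤}

section Aux
variable {S : Type*} [Ring S] {Δ : Type*} [AddCommGroup Δ] [LinearOrder Δ] [IsOrderedAddMonoid Δ]
  {w : S → WithTop Δ}

theorem IsValuation.neg_one' (hw : IsValuation w) : w (-1) = 0 := by
  have h := hw.map_mul (-1) (-1)
  rw [neg_mul_neg, one_mul, hw.map_one] at h
  cases hwn : w (-1 : S) with
  | top => rw [hwn, top_add] at h; simp at h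
  | coe a =>
    rw [hwn, ← WithTop.coe_add] at h
    have ha : a + a = 0 := by exact_mod_cast h
    have : a = 0 := by
      rcases lt_trichotomy a 0 with h' | h' | h'
      · exact absurd ha (ne_of_lt (add_neg h' h'))
      · exact h'
      · exact absurd ha (ne_of_gt (add_pos h' h'))
    rw [this, WithTop.coe_zero]

theorem IsValuation.map_neg' (hw : IsValuation w) (x : S) : w (-x) = w x := by
  rw [← neg_one_mul, hw.map_mul, hw.neg_one', zero_add]

theorem IsValuation.add_eq_left' (hw : IsValuation w) {x y : S} (h : w x < w y) :
    w (x + y) = w x := by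
  refine le_antisymm ?_ ?_
  · have h2 := hw.min_le_add (x + y) (-y)
    rw [add_neg_cancel_right, hw.map_neg'] at h2
    rcases min_le_iff.mp h2 with h3 | h3
    · exact h3
    · exact absurd h3 (not_le.mpr h)
  · have := hw.min_le_add x y
    rwa [min_eq_left h.le] at this

theorem IsValuation.pow_eq' (hw : IsValuation w) {x : S} {g : Δ} (hx : w x = ↑g) :
    ∀ n : ℕ, w (x ^ n) = ↑(n • g)
  | 0 => by simp [hw.map_one]
  | (n + 1) => by
      rw [pow_succ, hw.map_mul, hw.pow_eq' hx n, hx, ← WithTop.coe_add, succ_nsmul]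

theorem IsValuation.sum_lt' (hw : IsValuation w) {ι : Type*} (s : Finset ι) (f : ι → S)
    (c : Δ) (h : ∀ i ∈ s, (↑c : WithTop Δ) < w (f i)) :
    (↑c : WithTop Δ) < w (∑ i ∈ s, f i) := by
  classical
  induction s using Finset.induction with
  | empty => simp [hw.map_zero]
  | @insert a t hni ih =>
    rw [Finset.sum_insert hni]
    have h1 := h a (Finset.mem_insert_self a t)
    have h2 := ih (fun i hi => h i (Finset.mem_insert_of_mem hi))
    exact lt_of_lt_of_le (lt_min h1 h2) (hw.min_le_add _ _)

end Aux

/-- If `S` is integral over its subsuperring `R` and the valuation pair of `w` on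
`S` dominates that of `v` on `R`, then `S·supp v ⊆ supp w`; in particular
`supp v ⊆ supp w`, so `w` is an extension of `v` to `S`. -/
theorem extension_of_dominating_on_integral {R S : Type u} [Ring R] [Ring S]
    [Nontrivial R] [Nontrivial S]
    (𝒜 : ZMod 2 → AddSubgroup R) (ℬ : ZMod 2 → AddSubgroup S)
    (hR : IsSuperring 𝒜) (hS : IsSuperring ℬ)
    (ι : R →+* S) (hinj : Function.Injective ι)
    (hgrade : ∀ (i : ZMod 2) (x : R), x ∈ 𝒜 i ↔ ι x ∈ ℬ i)
    (hint : ∀ x ∈ ℬ 0, ∃ n : ℕ, 0 < n ∧ ∃ a : ℕ → R,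
      x ^ n + ∑ i ∈ Finset.range n, ι (a i) * x ^ i = 0)
    {Γ : Type*} [AddCommGroup Γ] [LinearOrder Γ] [IsOrderedAddMonoid Γ] {Δ : Type*} [AddCommGroup Δ] [LinearOrder Δ] [IsOrderedAddMonoid Δ]
    (v : R → WithTop Γ) (hv : IsValuation v)
    (w : S → WithTop Δ) (hw : IsValuation w)
    (hAA : valRing v ⊆ ι ⁻¹' valRing w)
    (hpp : valIdeal v = valRing v ∩ ι ⁻¹' valIdeal w) :
    (∀ s : S, ∀ x ∈ valSupp v, s * ι x ∈ valSupp w) ∧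
      valSupp v ⊆ ι ⁻¹' valSupp w ∧
      ∃ h : Γ →+ Δ, (∀ a b : Γ, a ≤ b ↔ h a ≤ h b) ∧
        ∀ x : R, w (ι x) = WithTop.map (⇑h) (v x) := by
  -- odd elements are in the support of w
  have hodd_top : ∀ s ∈ ℬ 1, w s = ⊤ := by
    intro s hs
    have h := hw.map_mul s s
    rw [hS.odd_sq s hs, hw.map_zero] at h
    cases hws : w s with
    | top => rfl
    | coe a =>
      rw [hws, ← WithTop.coe_add] at h
      exact absurd h.symm (WithTop.coe_ne_top)
  -- the support of v maps into the support of w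
  have hsupp : ∀ x : R, v x = ⊤ → w (ι x) = ⊤ := by
    intro x hx
    by_contra hne
    obtain ⟨d, hd⟩ : ∃ d : Δ, w (ι x) = ↑d := by
      cases hwx : w (ι x) with
      | top => exact absurd hwx hne
      | coe d => exact ⟨d, rfl⟩
    -- w ∘ ι is bounded below by -d
    have hbound : ∀ y : R, (↑(-d) : WithTop Δ) < w (ι y) := by
      intro y
      have hyx : v (y * x) = ⊤ := by rw [hv.map_mul, hx, add_top]
      have hmem : y * x ∈ valIdeal v := by
        simp only [valIdeal, Set.mem_setOf_eq, hyx]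
        exact WithTop.coe_lt_top 0
      rw [hpp] at hmem
      have h0 : 0 < w (ι (y * x)) := hmem.2
      rw [map_mul, hw.map_mul, hd] at h0
      cases hwy : w (ι y) with
      | top => exact WithTop.coe_lt_top _
      | coe e =>
        rw [hwy, ← WithTop.coe_add] at h0
        have he : (0 : Δ) < e + d := by exact_mod_cast h0
        have hde : -d < e := by
          by_contra hc
          push_neg at hc
          have h3 := add_le_add_left hc d
          rw [neg_add_cancel] at h3
          exact absurd he (not_lt.mpr h3)
        exact_mod_cast hde
    set γ₀ : Δ := min 0 (-d) with hγ₀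
    have hγneg : γ₀ ≤ 0 := min_le_left _ _
    have hγd : γ₀ ≤ -d := min_le_right _ _
    -- find an even element of value γ₀
    obtain ⟨t, ht⟩ := hw.surjective ↑γ₀
    obtain ⟨t0, ht0, t1, ht1, hdec⟩ := hS.decompose t
    have hwt1 : w t1 = ⊤ := hodd_top t1 ht1
    have hwt0 : w t0 = ↑γ₀ := by
      have h1 : w t0 ≤ w t := by
        have h' := hw.min_le_add t0 t1
        rw [← hdec, hwt1, min_eq_left le_top] at h'
        exact h'
      have h2 : w t ≤ w t0 := by
        have h' := hw.min_le_add t (-t1)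
        have heq0 : t + -t1 = t0 := by rw [hdec]; abel
        rw [heq0, hw.map_neg', hwt1, min_eq_left le_top] at h'
        exact h'
      rw [ht] at h1 h2
      exact le_antisymm h1 h2
    obtain ⟨n, hn, a, heq⟩ := hint t0 ht0
    have hterm : ∀ i ∈ Finset.range n,
        (↑(n • γ₀) : WithTop Δ) < w (ι (a i) * t0 ^ i) := by
      intro i hi
      have hin : i < n := Finset.mem_range.mp hi
      rw [hw.map_mul, hw.pow_eq' hwt0 i]
      have hk : (n - i) • γ₀ ≤ -d := by
        obtain ⟨m, hm⟩ : ∃ m, n - i = m + 1 := ⟨n - i - 1, by omega⟩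
        rw [hm, succ_nsmul]
        calc m • γ₀ + γ₀ ≤ 0 + γ₀ := add_le_add_left (nsmul_nonpos hγneg m) _
          _ = γ₀ := zero_add _
          _ ≤ -d := hγd
      have hsplit : n • γ₀ = (n - i) • γ₀ + i • γ₀ := by
        rw [← add_nsmul]; congr 1; omega
      cases hai : w (ι (a i)) with
      | top => rw [top_add]; exact WithTop.coe_lt_top _
      | coe e =>
        have he : -d < e := by
          have := hbound (a i); rw [hai] at this; exact_mod_cast this
        rw [← WithTop.coe_add, WithTop.coe_lt_coe, hsplit]
        calc (n - i) • γ₀ + i • γ₀ ≤ -d + i • γ₀ := add_le_add_left hk _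
          _ < e + i • γ₀ := add_lt_add_left he _
    have hsum := hw.sum_lt' (Finset.range n) (fun i => ι (a i) * t0 ^ i) (n • γ₀) hterm
    have hlt : w (t0 ^ n) < w (∑ i ∈ Finset.range n, ι (a i) * t0 ^ i) := by
      rw [hw.pow_eq' hwt0 n]; exact hsum
    have hfin := hw.add_eq_left' hlt
    rw [heq, hw.map_zero, hw.pow_eq' hwt0 n] at hfin
    exact WithTop.coe_ne_top hfin.symm
  -- value-zero elements map to value zero
  have hzero : ∀ x : R, v x = 0 → w (ι x) = 0 := by
    intro x hx
    have hxA : x ∈ valRing v := by simp [valRing, hx]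
    have h1 : 0 ≤ w (ι x) := hAA hxA
    have h2 : ¬ 0 < w (ι x) := by
      intro h
      have : x ∈ valIdeal v := by rw [hpp]; exact ⟨hxA, h⟩
      simp [valIdeal, hx] at this
    exact le_antisymm (not_lt.mp h2) h1
  -- finiteness of w ∘ ι on finite values
  have hfin : ∀ (γ : Γ) (x : R), v x = ↑γ → ∃ e : Δ, w (ι x) = ↑e := by
    intro γ x hx
    obtain ⟨y, hy⟩ := hv.surjective ↑(-γ)
    have hxy : v (x * y) = 0 := by
      rw [hv.map_mul, hx, hy, ← WithTop.coe_add, add_neg_cancel, WithTop.coe_zero]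
    have h0 := hzero _ hxy
    rw [map_mul, hw.map_mul] at h0
    cases hwx : w (ι x) with
    | top => rw [hwx, top_add] at h0; simp at h0
    | coe e => exact ⟨e, rfl⟩
  -- well-definedness
  have hwd : ∀ (γ : Γ) (x y : R), v x = ↑γ → v y = ↑γ → w (ι x) = w (ι y) := by
    intro γ x y hx hy
    obtain ⟨z, hz⟩ := hv.surjective ↑(-γ)
    obtain ⟨e, he⟩ := hfin _ _ hz
    have hx0 : w (ι x) + ↑e = 0 := by
      have hxz : v (x * z) = 0 := by
        rw [hv.map_mul, hx, hz, ← WithTop.coe_add, add_neg_cancel, WithTop.coe_zero]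
      have := hzero _ hxz
      rwa [map_mul, hw.map_mul, he] at this
    have hy0 : w (ι y) + ↑e = 0 := by
      have hyz : v (y * z) = 0 := by
        rw [hv.map_mul, hy, hz, ← WithTop.coe_add, add_neg_cancel, WithTop.coe_zero]
      have := hzero _ hyz
      rwa [map_mul, hw.map_mul, he] at this
    exact WithTop.add_right_cancel (WithTop.coe_ne_top) (hx0.trans hy0.symm)
  -- construct h
  choose xg hxg using fun γ : Γ => hv.surjective (↑γ)
  choose f hf using fun γ : Γ => hfin γ (xg γ) (hxg γ)
  have hfx : ∀ (γ : Γ) (x : R), v x = ↑γ → w (ι x) = ↑(f γ) := fun γ x hx =>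
    (hwd γ x (xg γ) hx (hxg γ)).trans (hf γ)
  have hfadd : ∀ γ₁ γ₂ : Γ, f (γ₁ + γ₂) = f γ₁ + f γ₂ := by
    intro γ₁ γ₂
    have hx : v (xg γ₁ * xg γ₂) = ↑(γ₁ + γ₂) := by
      rw [hv.map_mul, hxg, hxg, WithTop.coe_add]
    have h1 := hfx _ _ hx
    rw [map_mul, hw.map_mul, hf, hf, ← WithTop.coe_add] at h1
    exact_mod_cast h1.symm
  have hf_nonneg : ∀ γ : Γ, 0 ≤ γ → 0 ≤ f γ := by
    intro γ hγ
    have hx : xg γ ∈ valRing v := by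
      simp only [valRing, Set.mem_setOf_eq, hxg]
      exact_mod_cast hγ
    have h1 : 0 ≤ w (ι (xg γ)) := hAA hx
    rw [hf] at h1
    exact_mod_cast h1
  have hf_pos : ∀ γ : Γ, 0 < γ → 0 < f γ := by
    intro γ hγ
    have hx : xg γ ∈ valIdeal v := by
      simp only [valIdeal, Set.mem_setOf_eq, hxg]
      exact_mod_cast hγ
    rw [hpp] at hx
    have h1 : 0 < w (ι (xg γ)) := hx.2
    rw [hf] at h1
    exact_mod_cast h1
  refine ⟨?_, ?_, AddMonoidHom.mk' f hfadd, ?_, ?_⟩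
  · intro s x hx
    have h1 : w (ι x) = ⊤ := hsupp x hx
    show w (s * ι x) = ⊤
    rw [hw.map_mul, h1, add_top]
  · intro x hx
    exact hsupp x hx
  · intro a b
    show a ≤ b ↔ f a ≤ f b
    constructor
    · intro hab
      have h1 : 0 ≤ f (b - a) := hf_nonneg _ (sub_nonneg.mpr hab)
      have h2 : f b = f (b - a) + f a := by rw [← hfadd]; congr 1; abel
      rw [h2]
      exact le_add_of_nonneg_left h1
    · intro hab
      by_contra hba
      push_neg at hba
      have h1 : 0 < f (a - b) := hf_pos _ (sub_pos.mpr hba)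
      have h2 : f a = f (a - b) + f b := by rw [← hfadd]; congr 1; abel
      refine absurd hab (not_le.mpr ?_)
      rw [h2]
      exact lt_add_of_pos_left _ h1
  · intro x
    show w (ι x) = WithTop.map f (v x)
    cases hx : v x with
    | top => rw [WithTop.map_top]; exact hsupp x hx
    | coe γ => rw [WithTop.map_coe]; exact hfx γ x hx
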